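/- Let n ≥ 1 and let q be an indeterminate. Then 24·∑_{j=1}^{n-1} 1/[j]_q ≡ 12(n-1)(1-q) + (n²-1)(1-q)²[n]_q modulo Φ_n(q)², as an identity of rational functions over ℚ, i.e. the difference is a rational function whose numerator (after clearing the denominators ∏_{j=1}^{n-1}[j]_q) is divisible by Φ_n(q)² in ℚ[q]. -/

import Mathlib

open Polynomial Finset

/-- The q-integer [j]_q = 1 + q + ⋯ + q^{j-1} as a polynomial. -/
noncomputable def qInt (j : ℕ) : Polynomial ℚ := ∑ i ∈ Finset.range j, Polynomial.X ^ i


open Polynomial Finset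

section FieldLemmas

variable {K : Type*} [Field K]

lemma qw_geom_zero {n : ℕ} {x : K} (hx : x ^ n = 1) (hx1 : x ≠ 1) :
    ∑ k ∈ Finset.range n, x ^ k = 0 := by
  have h := geom_sum_mul x n
  rw [hx, sub_self] at h
  rcases mul_eq_zero.mp h with h | h
  · exact h
  · exact absurd (sub_eq_zero.mp h) hx1

lemma qw_F_mul {n : ℕ} {x : K} (hx : x ^ n = 1) (hx1 : x ≠ 1) :
    (1 - x) * ∑ k ∈ Finset.range n, ((k : K) + 1) * x ^ k = -(n : K) := by
  have h1 : ∑ k ∈ Finset.range n, ((k : K) + 1) * x ^ (k + 1)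
      = (∑ k ∈ Finset.range n, (k : K) * x ^ k) + (n : K) * x ^ n := by
    have hs := Finset.sum_range_succ' (fun k => (k : K) * x ^ k) n
    have hs2 := Finset.sum_range_succ (fun k => (k : K) * x ^ k) n
    rw [hs2] at hs
    push_cast at hs
    simpa using hs.symm
  have h2 : ∑ k ∈ Finset.range n, ((k : K) + 1) * x ^ k
      = (∑ k ∈ Finset.range n, (k : K) * x ^ k) + ∑ k ∈ Finset.range n, x ^ k := by
    rw [← Finset.sum_add_distrib]
    exact Finset.sum_congr rfl fun k _ => by ring
  have h3 : (1 - x) * ∑ k ∈ Finset.range n, ((k : K) + 1) * x ^ k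
      = (∑ k ∈ Finset.range n, ((k : K) + 1) * x ^ k)
        - ∑ k ∈ Finset.range n, ((k : K) + 1) * x ^ (k + 1) := by
    rw [sub_mul, one_mul, Finset.mul_sum]
    congr 1
    exact Finset.sum_congr rfl fun k _ => by ring
  rw [h3, h1, hx, h2, qw_geom_zero hx hx1]
  ring

lemma qw_Icc_eq {n : ℕ} : Finset.Icc 1 (n - 1) = (Finset.range n).erase 0 := by
  ext j
  simp only [Finset.mem_Icc, Finset.mem_erase, Finset.mem_range]
  omega

lemma qw_inner {n : ℕ} (hn : 2 ≤ n) {ζ : K} (hζ : IsPrimitiveRoot ζ n) {k l : ℕ}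
    (hk : k < n) (hl : l < n) :
    ∑ j ∈ Finset.Icc 1 (n - 1), ζ ^ (j * k + (n - j) * l)
      = if k = l then (n : K) - 1 else -1 := by
  have hζn : ζ ^ n = 1 := hζ.pow_eq_one
  have hterm : ∀ j ∈ Finset.Icc 1 (n - 1), ζ ^ (j * k + (n - j) * l) = (ζ ^ (n + k - l)) ^ j := by
    intro j hj
    simp only [Finset.mem_Icc] at hj
    have he : (n + k - l) * j + n * l = (j * k + (n - j) * l) + n * j := by
      have h1 : l ≤ n + k := by omega
      have h2 : j ≤ n := by omega
      zify [h1, h2]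
      ring
    have e1 : ζ ^ ((n + k - l) * j) * ζ ^ (n * l) = ζ ^ (j * k + (n - j) * l) * ζ ^ (n * j) := by
      rw [← pow_add, ← pow_add, he]
    rw [pow_mul, pow_mul, pow_mul, hζn, one_pow, one_pow, mul_one, mul_one] at e1
    exact e1.symm
  rw [Finset.sum_congr rfl hterm]
  by_cases hkl : k = l
  · subst hkl
    have : n + k - k = n := by omega
    rw [this, hζn, if_pos rfl]
    simp only [one_pow, Finset.sum_const, Nat.card_Icc, smul_eq_mul, mul_one]
    have : n - 1 + 1 - 1 = n - 1 := by omega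
    rw [this, nsmul_eq_mul, mul_one, Nat.cast_sub (by omega : 1 ≤ n), Nat.cast_one]
  · rw [if_neg hkl]
    have hy1 : ζ ^ (n + k - l) ≠ 1 := by
      intro h
      have := (hζ.pow_eq_one_iff_dvd (n + k - l)).mp h
      obtain ⟨c, hc⟩ := this
      rcases c with _ | c
      · omega
      · rcases c with _ | c
        · omega
        · have h2 : n * (c + 1 + 1) = n * c + n + n := by ring
          omega
    have hyn : (ζ ^ (n + k - l)) ^ n = 1 := by
      rw [← pow_mul, mul_comm, pow_mul, hζn, one_pow]
    rw [qw_Icc_eq, Finset.sum_erase_eq_sub (by simp; omega), qw_geom_zero hyn hy1]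
    simp

lemma qw_sum1 (n : ℕ) : (2 : K) * ∑ k ∈ Finset.range n, ((k : K) + 1) = (n : K) * ((n : K) + 1) := by
  induction n with
  | zero => simp
  | succ m ih =>
    rw [Finset.sum_range_succ, mul_add, ih]
    push_cast
    ring

lemma qw_sum2 (n : ℕ) : (6 : K) * ∑ k ∈ Finset.range n, ((k : K) + 1) ^ 2
    = (n : K) * ((n : K) + 1) * (2 * (n : K) + 1) := by
  induction n with
  | zero => simp
  | succ m ih =>
    rw [Finset.sum_range_succ, mul_add, ih]
    push_cast
    ring

end FieldLemmas

lemma qw_key_field {K : Type*} [Field K] [CharZero K] {n : ℕ} (hn : 2 ≤ n) {ζ : K}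
    (hζ : IsPrimitiveRoot ζ n) :
    (24 : K) * ∑ j ∈ Finset.Icc 1 (n - 1), ((1 - ζ ^ j) * (1 - ζ ^ (n - j)))⁻¹
      = 2 * ((n : K) ^ 2 - 1) := by
  have hn0 : (n : K) ≠ 0 := Nat.cast_ne_zero.mpr (by omega)
  have hζn : ζ ^ n = 1 := hζ.pow_eq_one
  have hxn : ∀ j : ℕ, (ζ ^ j) ^ n = 1 := fun j => by
    rw [← pow_mul, mul_comm, pow_mul, hζn, one_pow]
  have hne : ∀ j ∈ Finset.Icc 1 (n - 1), ζ ^ j ≠ 1 := fun j hj => by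
    simp only [Finset.mem_Icc] at hj
    exact hζ.pow_ne_one_of_pos_of_lt (by omega) (by omega)
  set F : K → K := fun x => ∑ k ∈ Finset.range n, ((k : K) + 1) * x ^ k with hF
  -- each term equals F (ζ^j) * F (ζ^(n-j)) / n^2
  have hterm : ∀ j ∈ Finset.Icc 1 (n - 1),
      ((1 - ζ ^ j) * (1 - ζ ^ (n - j)))⁻¹ = F (ζ ^ j) * F (ζ ^ (n - j)) / (n : K) ^ 2 := by
    intro j hj
    have hj' := hj
    simp only [Finset.mem_Icc] at hj'
    have hj2 : n - j ∈ Finset.Icc 1 (n - 1) := by simp only [Finset.mem_Icc]; omega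
    have e1 := qw_F_mul (hxn j) (hne j hj)
    have e2 := qw_F_mul (hxn (n - j)) (hne _ hj2)
    have hmul : ((1 - ζ ^ j) * (1 - ζ ^ (n - j))) * (F (ζ ^ j) * F (ζ ^ (n - j)))
        = (n : K) ^ 2 := by
      calc ((1 - ζ ^ j) * (1 - ζ ^ (n - j))) * (F (ζ ^ j) * F (ζ ^ (n - j)))
          = ((1 - ζ ^ j) * F (ζ ^ j)) * ((1 - ζ ^ (n - j)) * F (ζ ^ (n - j))) := by ring
        _ = (-(n : K)) * (-(n : K)) := by rw [e1, e2]
        _ = (n : K) ^ 2 := by ring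
    have hne0 : (1 - ζ ^ j) * (1 - ζ ^ (n - j)) ≠ 0 := by
      intro h
      rw [h, zero_mul] at hmul
      exact pow_ne_zero 2 hn0 hmul.symm
    rw [eq_div_iff (pow_ne_zero 2 hn0)]
    rw [← hmul]
    field_simp
    rw [mul_assoc _ (F (ζ ^ j)), mul_div_cancel_left₀ _ hne0]
  rw [Finset.sum_congr rfl hterm]
  -- expand the double sum
  have hFF : ∀ j ∈ Finset.Icc 1 (n - 1), F (ζ ^ j) * F (ζ ^ (n - j))
      = ∑ k ∈ Finset.range n, ∑ l ∈ Finset.range n,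
          (((k : K) + 1) * ((l : K) + 1)) * ζ ^ (j * k + (n - j) * l) := by
    intro j _
    rw [hF, Finset.sum_mul_sum]
    refine Finset.sum_congr rfl fun k _ => Finset.sum_congr rfl fun l _ => ?_
    rw [← pow_mul, ← pow_mul, pow_add]
    ring
  have hswap : ∑ j ∈ Finset.Icc 1 (n - 1), F (ζ ^ j) * F (ζ ^ (n - j))
      = ∑ k ∈ Finset.range n, ∑ l ∈ Finset.range n,
          (((k : K) + 1) * ((l : K) + 1)) * (if k = l then (n : K) - 1 else -1) := by
    rw [Finset.sum_congr rfl hFF, Finset.sum_comm]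
    refine Finset.sum_congr rfl fun k hk => ?_
    rw [Finset.sum_comm]
    refine Finset.sum_congr rfl fun l hl => ?_
    rw [← Finset.mul_sum, qw_inner hn hζ (Finset.mem_range.mp hk) (Finset.mem_range.mp hl)]
  -- compute the double sum
  have hdiag : ∑ k ∈ Finset.range n, ∑ l ∈ Finset.range n,
      (((k : K) + 1) * ((l : K) + 1)) * (if k = l then (n : K) - 1 else -1)
      = (n : K) * (∑ k ∈ Finset.range n, ((k : K) + 1) ^ 2)
        - (∑ k ∈ Finset.range n, ((k : K) + 1)) ^ 2 := by
    have hsplit : ∀ k ∈ Finset.range n, ∑ l ∈ Finset.range n,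
        (((k : K) + 1) * ((l : K) + 1)) * (if k = l then (n : K) - 1 else -1)
        = (n : K) * ((k : K) + 1) ^ 2
          - ((k : K) + 1) * ∑ l ∈ Finset.range n, ((l : K) + 1) := by
      intro k hk
      have : ∀ l ∈ Finset.range n, (((k : K) + 1) * ((l : K) + 1)) * (if k = l then (n : K) - 1 else -1)
          = (if k = l then ((n : K) * ((k : K) + 1) ^ 2) else 0)
            - ((k : K) + 1) * ((l : K) + 1) := by
        intro l _
        by_cases h : k = l
        · subst h; simp; ring
        · simp [h]
      rw [Finset.sum_congr rfl this, Finset.sum_sub_distrib, Finset.sum_ite_eq (Finset.range n) k]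
      rw [if_pos hk, ← Finset.mul_sum]
    rw [Finset.sum_congr rfl hsplit, Finset.sum_sub_distrib, ← Finset.mul_sum, ← Finset.sum_mul]
    ring
  have h1 := qw_sum1 (K := K) n
  have h2 := qw_sum2 (K := K) n
  rw [← Finset.sum_div, hswap, hdiag]
  set S1 : K := ∑ k ∈ Finset.range n, ((k : K) + 1) with hS1
  set S2 : K := ∑ k ∈ Finset.range n, ((k : K) + 1) ^ 2 with hS2
  have hrw : (24 : K) * (((n : K) * S2 - S1 ^ 2) / (n : K) ^ 2)
      = (24 * ((n : K) * S2 - S1 ^ 2)) / (n : K) ^ 2 := by ring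
  rw [hrw, div_eq_iff (pow_ne_zero 2 hn0)]
  linear_combination (4 * (n : K)) * h2 + (-12 * S1 - 6 * (n : K) * ((n : K) + 1)) * h1



lemma qw_main {A : Type*} [CommRing A] {n : ℕ} (hn : 2 ≤ n)
    (v u : A) (w g : ℕ → A) (c1 c2 : A)
    (hvg : ∀ k, v * g k = w k)
    (hun : u = w n)
    (hwunit : ∀ k ∈ Finset.Icc 1 (n - 1), IsUnit (w k))
    (hvunit : IsUnit v)
    (hpair : ∀ j ∈ Finset.Icc 1 (n - 1), w j + w (n - j) = w j * w (n - j) + u)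
    (hC : u * (24 * ∑ j ∈ Finset.Icc 1 (n - 1),
            Ring.inverse (w j) * Ring.inverse (w (n - j))) = u * (2 * c2))
    (hc1 : 2 * c1 = 24 * ((n - 1 : ℕ) : A))
    (htwo : ∀ x y : A, 2 * x = 2 * y → x = y) :
    24 * ∑ j ∈ Finset.Icc 1 (n - 1), ∏ k ∈ (Finset.Icc 1 (n - 1)).erase j, g k
      = (c1 * v + c2 * (v ^ 2 * g n)) * ∏ j ∈ Finset.Icc 1 (n - 1), g j := by
  set I : Finset ℕ := Finset.Icc 1 (n - 1) with hI
  have hIcard : I.card = n - 1 := by rw [hI, Nat.card_Icc]; omega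
  have hmem : ∀ j ∈ I, n - j ∈ I := by
    intro j hj
    rw [hI] at *
    simp only [Finset.mem_Icc] at *
    omega
  set b : ℕ → A := fun k => Ring.inverse (w k) with hb
  set W : A := ∏ k ∈ I, w k with hW
  set Q : ℕ → A := fun j => ∏ k ∈ I.erase j, w k with hQ
  have hQW : ∀ j ∈ I, Q j = W * b j := by
    intro j hj
    have h1 : Q j * w j = W := Finset.prod_erase_mul I w hj
    have h2 : w j * b j = 1 := Ring.mul_inverse_cancel (w j) (hwunit j hj)
    calc Q j = Q j * (w j * b j) := by rw [h2, mul_one]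
      _ = (Q j * w j) * b j := by ring
      _ = W * b j := by rw [h1]
  have hre : ∀ f : ℕ → A, ∑ j ∈ I, f (n - j) = ∑ j ∈ I, f j := by
    intro f
    refine Finset.sum_nbij' (fun j => n - j) (fun j => n - j) ?_ ?_ ?_ ?_ ?_ <;>
      intro a ha <;> simp only [hI, Finset.mem_Icc] at * <;> omega
  have hQpair : ∀ j ∈ I, Q j + Q (n - j) = W + u * (W * (b j * b (n - j))) := by
    intro j hj
    have hj2 := hmem j hj
    have h1 : w j * b j = 1 := Ring.mul_inverse_cancel (w j) (hwunit j hj)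
    have h2 : w (n - j) * b (n - j) = 1 := Ring.mul_inverse_cancel (w (n - j)) (hwunit _ hj2)
    have e1 : b j + b (n - j) = (w j + w (n - j)) * (b j * b (n - j)) := by
      linear_combination (-(b (n - j))) * h1 + (-(b j)) * h2
    have e2 : (w j + w (n - j)) * (b j * b (n - j)) = 1 + u * (b j * b (n - j)) := by
      rw [hpair j hj]
      linear_combination (w (n - j) * b (n - j)) * h1 + h2
    rw [hQW j hj, hQW _ hj2]
    calc W * b j + W * b (n - j) = W * (b j + b (n - j)) := by ring
      _ = W * (1 + u * (b j * b (n - j))) := by rw [e1, e2]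
      _ = W + u * (W * (b j * b (n - j))) := by ring
  have key : 24 * ∑ j ∈ I, Q j = (c1 + c2 * u) * W := by
    apply htwo
    calc 2 * (24 * ∑ j ∈ I, Q j)
        = 24 * (∑ j ∈ I, Q j + ∑ j ∈ I, Q (n - j)) := by rw [hre (fun j => Q j)]; ring
      _ = 24 * ∑ j ∈ I, (Q j + Q (n - j)) := by rw [Finset.sum_add_distrib]
      _ = 24 * ∑ j ∈ I, (W + u * (W * (b j * b (n - j)))) := by rw [Finset.sum_congr rfl hQpair]
      _ = 24 * (((n - 1 : ℕ) : A) * W) + 24 * ∑ j ∈ I, u * (W * (b j * b (n - j))) := by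
          rw [Finset.sum_add_distrib, Finset.sum_const, hIcard, nsmul_eq_mul, mul_add]
      _ = 24 * (((n - 1 : ℕ) : A) * W) + W * (u * (24 * ∑ j ∈ I, b j * b (n - j))) := by
          congr 1
          simp only [Finset.mul_sum]
          exact Finset.sum_congr rfl fun i _ => by ring
      _ = 2 * c1 * W + W * (u * (2 * c2)) := by
          have hC' : u * (24 * ∑ j ∈ I, b j * b (n - j)) = u * (2 * c2) := hC
          rw [hC', hc1]
          ring
      _ = 2 * ((c1 + c2 * u) * W) := by ring
  apply (hvunit.pow (n - 1)).mul_left_cancel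
  have hv' : v ^ (n - 1) = v * v ^ (n - 2) := by
    rw [show n - 1 = (n - 2) + 1 from by omega, pow_succ']
  have herase : ∀ j ∈ I, v ^ (n - 2) * ∏ k ∈ I.erase j, g k = Q j := by
    intro j hj
    have hQj : Q j = ∏ k ∈ I.erase j, (v * g k) :=
      Finset.prod_congr rfl fun k _ => (hvg k).symm
    rw [hQj, Finset.prod_mul_distrib, Finset.prod_const, Finset.card_erase_of_mem hj, hIcard,
      show n - 1 - 1 = n - 2 from by omega]
  have hL : v ^ (n - 1) * (24 * ∑ j ∈ I, ∏ k ∈ I.erase j, g k) = v * (24 * ∑ j ∈ I, Q j) := by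
    simp only [Finset.mul_sum]
    refine Finset.sum_congr rfl fun j hj => ?_
    rw [hv', ← herase j hj]
    ring
  have hWv : v ^ (n - 1) * ∏ j ∈ I, g j = W := by
    rw [hW, show ∏ k ∈ I, w k = ∏ k ∈ I, (v * g k) from
      Finset.prod_congr rfl fun k _ => (hvg k).symm,
      Finset.prod_mul_distrib, Finset.prod_const, hIcard]
  have hvu : v * u = v ^ 2 * g n := by
    rw [hun, ← hvg n]
    ring
  have hR : v ^ (n - 1) * ((c1 * v + c2 * (v ^ 2 * g n)) * ∏ j ∈ I, g j)
      = v * ((c1 + c2 * u) * W) := by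
    calc v ^ (n - 1) * ((c1 * v + c2 * (v ^ 2 * g n)) * ∏ j ∈ I, g j)
        = (c1 * v + c2 * (v ^ 2 * g n)) * (v ^ (n - 1) * ∏ j ∈ I, g j) := by ring
      _ = (c1 * v + c2 * (v * u)) * W := by rw [hWv, ← hvu]
      _ = v * ((c1 + c2 * u) * W) := by ring
  rw [hL, hR, key]

set_option maxHeartbeats 1600000 in
theorem q_wolstenholme (n : ℕ) (hn : 1 ≤ n) :
    (Polynomial.cyclotomic n ℚ) ^ 2 ∣
      (24 * ∑ j ∈ Finset.Icc 1 (n - 1), ∏ k ∈ (Finset.Icc 1 (n - 1)).erase j, qInt k)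
        - ((12 * (n - 1 : ℚ)) • ((1 : Polynomial ℚ) - Polynomial.X)
            + ((n^2 - 1 : ℚ)) • (((1 : Polynomial ℚ) - Polynomial.X) ^ 2 * qInt n))
          * ∏ j ∈ Finset.Icc 1 (n - 1), qInt j := by
  rcases eq_or_lt_of_le hn with h1 | hn2
  · -- n = 1
    rw [← h1]
    norm_num
  · -- 2 ≤ n
    have hn2 : 2 ≤ n := hn2
    clear hn
    have hpos : 0 < n := by omega
    have hirr : Irreducible (cyclotomic n ℚ) := cyclotomic.irreducible_rat hpos
    set Φ : Polynomial ℚ := cyclotomic n ℚ with hΦdef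
    set J2 : Ideal (Polynomial ℚ) := Ideal.span {Φ ^ 2} with hJ2
    set J1 : Ideal (Polynomial ℚ) := Ideal.span {Φ} with hJ1
    haveI hmax : J1.IsMaximal := PrincipalIdealRing.isMaximal_of_irreducible hirr
    letI : Field (Polynomial ℚ ⧸ J1) := Ideal.Quotient.field J1
    set π : Polynomial ℚ →+* (Polynomial ℚ ⧸ J2) := Ideal.Quotient.mk J2 with hπ
    set σ : Polynomial ℚ →+* (Polynomial ℚ ⧸ J1) := Ideal.Quotient.mk J1 with hσ
    have hσ0 : ∀ p : Polynomial ℚ, σ p = 0 ↔ Φ ∣ p := fun p =>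
      Ideal.Quotient.eq_zero_iff_dvd Φ p
    have hπ0 : ∀ p : Polynomial ℚ, π p = 0 ↔ Φ ^ 2 ∣ p := fun p =>
      Ideal.Quotient.eq_zero_iff_dvd (Φ ^ 2) p
    have hle : J2 ≤ J1 := by
      rw [hJ2, hJ1, Ideal.span_singleton_le_span_singleton]
      exact ⟨Φ, sq Φ⟩
    set ρ : (Polynomial ℚ ⧸ J2) →+* (Polynomial ℚ ⧸ J1) := Ideal.Quotient.factor hle
      with hρ
    have hρπ : ∀ p, ρ (π p) = σ p := fun p => Ideal.Quotient.factor_mk hle p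
    -- CharZero for the residue field
    haveI : CharZero (Polynomial ℚ ⧸ J1) := by
      constructor
      intro a b hab
      by_contra hne
      have h1 : σ ((a : Polynomial ℚ) - (b : Polynomial ℚ)) = 0 := by
        rw [map_sub, map_natCast, map_natCast, hab, sub_self]
      have h2 : Φ ∣ (a : Polynomial ℚ) - (b : Polynomial ℚ) := (hσ0 _).mp h1
      have h3 : ((a : Polynomial ℚ) - (b : Polynomial ℚ)) = C ((a : ℚ) - (b : ℚ)) := by
        rw [map_sub, Polynomial.C_eq_natCast, Polynomial.C_eq_natCast]
      have h4 : IsUnit ((a : Polynomial ℚ) - (b : Polynomial ℚ)) := by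
        rw [h3]
        refine Polynomial.isUnit_C.mpr (isUnit_iff_ne_zero.mpr ?_)
        intro h
        apply hne
        have : (a : ℚ) = (b : ℚ) := by linarith [sub_eq_zero.mp h]
        exact_mod_cast this
      exact hirr.not_isUnit (isUnit_of_dvd_unit h2 h4)
    -- the primitive root
    set ζ : Polynomial ℚ ⧸ J1 := σ X with hζdef
    have hσeval : ∀ p : Polynomial ℚ, eval₂ (σ.comp Polynomial.C) ζ p = σ p := by
      intro p
      have h := Polynomial.hom_eval₂ (p := p) (f := Polynomial.C) (g := σ) X
      rw [Polynomial.eval₂_C_X] at h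
      exact h.symm
    haveI : NeZero ((n : Polynomial ℚ ⧸ J1)) := ⟨Nat.cast_ne_zero.mpr (by omega)⟩
    have hζprim : IsPrimitiveRoot ζ n := by
      apply (Polynomial.isRoot_cyclotomic_iff (R := Polynomial ℚ ⧸ J1) (n := n)).mp
      rw [Polynomial.IsRoot.def, ← Polynomial.map_cyclotomic n (σ.comp Polynomial.C),
        Polynomial.eval_map, hσeval]
      exact (hσ0 Φ).mpr dvd_rfl
    -- units
    have hunit : ∀ p : Polynomial ℚ, σ p ≠ 0 → IsUnit (π p) := by
      intro p hp
      have hnd : ¬ Φ ∣ p := fun h => hp ((hσ0 p).mpr h)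
      obtain ⟨a, c, hac⟩ := hirr.coprime_pow_of_not_dvd 2 hnd
      refine IsUnit.of_mul_eq_one (π a) ?_
      have h0 : π (Φ ^ 2) = 0 := (hπ0 _).mpr dvd_rfl
      have h5 : π p * π a = π (a * p + c * Φ ^ 2) - π c * π (Φ ^ 2) := by
        rw [map_add, map_mul, map_mul]
        ring
      rw [h5, hac, h0, map_one, mul_zero, sub_zero]
    -- mod-Φ transfer
    have hXn : Φ ∣ X ^ n - 1 := cyclotomic.dvd_X_pow_sub_one n ℚ
    have hXn' : Φ ∣ 1 - X ^ n := by
      have h := (dvd_neg (α := Polynomial ℚ)).mpr hXn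
      rw [neg_sub] at h
      exact h
    have hukey : ∀ x y : Polynomial ℚ ⧸ J2, ρ x = ρ y →
        π (1 - X ^ n) * x = π (1 - X ^ n) * y := by
      intro x y hxy
      obtain ⟨p, hp⟩ := Ideal.Quotient.mk_surjective (I := J2) (x - y)
      have hπp : π p = x - y := hp
      have hσp : σ p = 0 := by
        rw [← hρπ p, hπp, map_sub, hxy, sub_self]
      have hΦp : Φ ∣ p := (hσ0 p).mp hσp
      have h2 : π ((1 - X ^ n) * p) = 0 := by
        rw [hπ0, pow_two]
        exact mul_dvd_mul hXn' hΦp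
      have h3 : π (1 - X ^ n) * (x - y) = 0 := by
        rw [← hπp, ← map_mul]
        exact h2
      linear_combination h3
    -- polynomial identities
    have hqint : ∀ k : ℕ, (1 - X : Polynomial ℚ) * qInt k = 1 - X ^ k := by
      intro k
      have h := geom_sum_mul (X : Polynomial ℚ) k
      simp only [qInt]
      linear_combination -h
    have hpairpoly : ∀ j, j ≤ n →
        ((1 : Polynomial ℚ) - X ^ j) + (1 - X ^ (n - j))
          = (1 - X ^ j) * (1 - X ^ (n - j)) + (1 - X ^ n) := by
      intro j hj
      have hxx : (X : Polynomial ℚ) ^ j * X ^ (n - j) = X ^ n := by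
        rw [← pow_add]
        congr 1
        omega
      linear_combination -hxx
    -- two is cancellable in the quotient
    have htwoA : ∀ x y : Polynomial ℚ ⧸ J2, 2 * x = 2 * y → x = y := by
      have hu : IsUnit (2 : Polynomial ℚ ⧸ J2) := by
        refine IsUnit.of_mul_eq_one (π (Polynomial.C (1/2 : ℚ))) ?_
        have h1 : (2 : Polynomial ℚ ⧸ J2) = π (Polynomial.C (2 : ℚ)) := by
          rw [map_ofNat (Polynomial.C : ℚ →+* Polynomial ℚ) 2, map_ofNat]
        rw [h1, ← map_mul, ← Polynomial.C_mul]
        norm_num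
      intro x y hxy
      exact hu.mul_left_cancel hxy
    -- reduce the divisibility to an equation in the quotient ring
    rw [Polynomial.smul_eq_C_mul, Polynomial.smul_eq_C_mul, ← hπ0, map_sub, sub_eq_zero]
    simp only [map_mul, map_add, map_sum, map_prod, map_pow, map_sub, map_one, map_ofNat]
    -- now apply the main computation
    have hvg : ∀ k, (1 - π X) * π (qInt k) = 1 - (π X) ^ k := by
      intro k
      have h := congrArg π (hqint k)
      simpa only [map_mul, map_sub, map_one, map_pow] using h
    have hσw : ∀ k : ℕ, ρ (1 - (π X) ^ k) = 1 - ζ ^ k := by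
      intro k
      rw [map_sub, map_one, map_pow, hρπ X]
    have hwunit : ∀ k ∈ Finset.Icc 1 (n - 1), IsUnit (1 - (π X) ^ k) := by
      intro k hk
      simp only [Finset.mem_Icc] at hk
      have h1 : (1 : Polynomial ℚ ⧸ J2) - (π X) ^ k = π (1 - X ^ k) := by
        rw [map_sub, map_one, map_pow]
      rw [h1]
      apply hunit
      have h2 : σ (1 - X ^ k) = 1 - ζ ^ k := by
        rw [map_sub, map_one, map_pow, hζdef]
      rw [h2]
      intro h
      have : ζ ^ k = 1 := by linear_combination -h
      exact hζprim.pow_ne_one_of_pos_of_lt (by omega) (by omega) this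
    have hvunit : IsUnit (1 - π X) := by
      have h1 : (1 : Polynomial ℚ ⧸ J2) - π X = π (1 - X) := by
        rw [map_sub, map_one]
      rw [h1]
      apply hunit
      have h2 : σ (1 - X) = 1 - ζ := by rw [map_sub, map_one, hζdef]
      rw [h2]
      intro h
      have h3 : ζ = 1 := by linear_combination -h
      have h4 : ζ ^ 1 = 1 := by rw [pow_one, h3]
      exact hζprim.pow_ne_one_of_pos_of_lt (by omega) (by omega) h4
    have hpairA : ∀ j ∈ Finset.Icc 1 (n - 1),
        (1 - (π X) ^ j) + (1 - (π X) ^ (n - j))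
          = (1 - (π X) ^ j) * (1 - (π X) ^ (n - j)) + (1 - (π X) ^ n) := by
      intro j hj
      simp only [Finset.mem_Icc] at hj
      have h := congrArg π (hpairpoly j (by omega))
      simpa only [map_add, map_mul, map_sub, map_one, map_pow] using h
    -- the key congruence via the residue field
    have hC : (1 - (π X) ^ n) * (24 * ∑ j ∈ Finset.Icc 1 (n - 1),
          Ring.inverse (1 - (π X) ^ j) * Ring.inverse (1 - (π X) ^ (n - j)))
        = (1 - (π X) ^ n) * (2 * (((n : Polynomial ℚ ⧸ J2)) ^ 2 - 1)) := by
      have hπu : (1 : Polynomial ℚ ⧸ J2) - (π X) ^ n = π (1 - X ^ n) := by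
        rw [map_sub, map_one, map_pow]
      rw [hπu]
      apply hukey
      -- compute both sides in the residue field
      have hρinv : ∀ k ∈ Finset.Icc 1 (n - 1),
          ρ (Ring.inverse (1 - (π X) ^ k)) = (1 - ζ ^ k)⁻¹ := by
        intro k hk
        have h1 : (1 - (π X) ^ k) * Ring.inverse (1 - (π X) ^ k) = 1 :=
          Ring.mul_inverse_cancel _ (hwunit k hk)
        have h2 := congrArg ρ h1
        rw [map_mul, map_one, hσw] at h2
        exact (inv_eq_of_mul_eq_one_right h2).symm
      have hmem : ∀ j ∈ Finset.Icc 1 (n - 1), n - j ∈ Finset.Icc 1 (n - 1) := by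
        intro j hj
        simp only [Finset.mem_Icc] at *
        omega
      have hLsum : ρ (∑ j ∈ Finset.Icc 1 (n - 1),
            Ring.inverse (1 - (π X) ^ j) * Ring.inverse (1 - (π X) ^ (n - j)))
          = ∑ j ∈ Finset.Icc 1 (n - 1), ((1 - ζ ^ j) * (1 - ζ ^ (n - j)))⁻¹ := by
        rw [map_sum]
        refine Finset.sum_congr rfl fun j hj => ?_
        rw [map_mul, hρinv j hj, hρinv _ (hmem j hj), mul_inv]
      have hc2 : ρ (((n : Polynomial ℚ ⧸ J2)) ^ 2 - 1) = (n : Polynomial ℚ ⧸ J1) ^ 2 - 1 := by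
        rw [map_sub, map_one, map_pow, map_natCast]
      rw [map_mul, map_mul, hLsum, hc2, map_ofNat ρ 24, map_ofNat ρ 2]
      exact qw_key_field hn2 hζprim
    -- the scalar identity for c1
    have hc1 : 2 * (12 * ((n : Polynomial ℚ ⧸ J2) - 1))
        = 24 * (((n - 1 : ℕ) : Polynomial ℚ ⧸ J2)) := by
      rw [Nat.cast_sub (by omega), Nat.cast_one]
      ring
    have hcn : π (Polynomial.C ((n : ℚ))) = ((n : Polynomial ℚ ⧸ J2)) := by
      rw [Polynomial.C_eq_natCast, map_natCast]
    rw [hcn]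
    exact qw_main hn2 (1 - π X) (1 - (π X) ^ n) (fun k => 1 - (π X) ^ k) (fun k => π (qInt k))
      (12 * ((n : Polynomial ℚ ⧸ J2) - 1)) (((n : Polynomial ℚ ⧸ J2)) ^ 2 - 1)
      hvg rfl hwunit hvunit hpairA hC hc1 htwoA
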